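/- Let ξ : ω → ω be a finite-to-one surjection such that lim inf_n |ξ⁻¹(n)| < ∞, and let F be a filter on ω with ξ(F) = Fr (the Fréchet filter). Then F has an infinite pseudointersection; consequently, any sequence (x_n) in a topological space X that F-converges to a point x_∞ admits a subsequence converging to x_∞ in the usual sense. -/

import Mathlib

open Set Filter Topology

/-- if `ξ` is a finite-to-one surjection with `liminf |ξ⁻¹(n)| < ∞`
(i.e. infinitely many `n` have `|ξ⁻¹(n)|` bounded by a fixed `m`) and `F` is a filter
with `ξ(F) = Fr`, then `F` has an infinite pseudointersection; consequently every
`F`-convergent sequence has a convergent subsequence. -/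
theorem stmt4 (ξ : ℕ → ℕ) (hfin : ∀ n, (ξ ⁻¹' {n}).Finite) (hsurj : Function.Surjective ξ)
    (hliminf : ∃ m : ℕ, {n : ℕ | (ξ ⁻¹' {n}).ncard ≤ m}.Infinite)
    (F : Filter ℕ) (hmap : Filter.map ξ F = Filter.cofinite) :
    (∃ A : Set ℕ, A.Infinite ∧ ∀ S ∈ F, (A \ S).Finite) ∧
    ∀ (X : Type*) [TopologicalSpace X] (x : ℕ → X) (xlim : X),
      Filter.Tendsto x F (𝓝 xlim) →
        ∃ φ : ℕ → ℕ, StrictMono φ ∧ Filter.Tendsto (x ∘ φ) Filter.atTop (𝓝 xlim) := by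
  classical
  obtain ⟨m, hm⟩ := hliminf
  set I : Set ℕ := {n : ℕ | (ξ ⁻¹' {n}).ncard ≤ m} with hIdef
  have himg : ∀ S ∈ F, (ξ '' S)ᶜ.Finite := by
    intro S hS
    have h1 : ξ '' S ∈ Filter.map ξ F := Filter.image_mem_map hS
    rw [hmap, Filter.mem_cofinite] at h1
    exact h1
  set f : Set ℕ → ℕ → ℕ := fun S n => (S ∩ ξ ⁻¹' {n}).ncard with hfdef
  have hfinSn : ∀ (S : Set ℕ) (n : ℕ), (S ∩ ξ ⁻¹' {n}).Finite :=
    fun S n => (hfin n).subset inter_subset_right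
  have hP : ∃ j, ∃ S ∈ F, {n | n ∈ I ∧ 0 < f S n ∧ f S n ≤ j}.Infinite := by
    refine ⟨m, univ, univ_mem, hm.mono ?_⟩
    intro n hn
    refine ⟨hn, ?_, ?_⟩
    · simp only [hfdef, univ_inter]
      rw [Set.ncard_pos (hfin n)]
      exact hsurj n
    · simpa [hfdef, hIdef] using hn
  set k := Nat.find hP with hkdef
  obtain ⟨S₀, hS₀F, hJ₀⟩ := Nat.find_spec hP
  have hk1 : 1 ≤ k := by
    obtain ⟨n, hn⟩ := hJ₀.nonempty
    exact le_trans hn.2.1 hn.2.2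
  set J : Set ℕ := {n | n ∈ I ∧ f S₀ n = k} with hJdef
  have hbad0 : {n | n ∈ I ∧ 0 < f S₀ n ∧ f S₀ n ≤ k - 1}.Finite := by
    by_contra hc
    rw [Set.not_infinite.symm, not_not] at hc
    exact Nat.find_min hP (Nat.sub_lt hk1 one_pos) ⟨S₀, hS₀F, hc⟩
  have hJinf : J.Infinite := by
    refine ((hJ₀.diff hbad0).mono ?_)
    rintro n ⟨⟨hnI, hpos, hle⟩, hnb⟩
    refine ⟨hnI, ?_⟩
    by_contra hne
    exact hnb ⟨hnI, hpos, by omega⟩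
  set A : Set ℕ := S₀ ∩ ξ ⁻¹' J with hAdef
  have hApi : A.Infinite ∧ ∀ S ∈ F, (A \ S).Finite := by
    constructor
    · have hsub : J ⊆ ξ '' A := by
        rintro n ⟨hnI, hfk⟩
        have hpos : 0 < f S₀ n := by omega
        rw [hfdef] at hpos
        simp only at hpos
        rw [Set.ncard_pos (hfinSn S₀ n)] at hpos
        obtain ⟨x, hxS₀, hxf⟩ := hpos
        exact ⟨x, ⟨hxS₀, by rw [Set.mem_preimage, hxf]; exact ⟨hnI, hfk⟩⟩, hxf⟩
      exact Set.Infinite.of_image ξ (hJinf.mono hsub)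
    · intro S hS
      have hS' : S ∩ S₀ ∈ F := inter_mem hS hS₀F
      have hC : (ξ '' (S ∩ S₀))ᶜ.Finite := himg _ hS'
      have hB : {n | n ∈ I ∧ 0 < f (S ∩ S₀) n ∧ f (S ∩ S₀) n ≤ k - 1}.Finite := by
        by_contra hc
        rw [Set.not_infinite.symm, not_not] at hc
        exact Nat.find_min hP (Nat.sub_lt hk1 one_pos) ⟨S ∩ S₀, hS', hc⟩
      set T := (ξ '' (S ∩ S₀))ᶜ ∪ {n | n ∈ I ∧ 0 < f (S ∩ S₀) n ∧ f (S ∩ S₀) n ≤ k - 1}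
      have hTfin : T.Finite := hC.union hB
      have hsub : A \ S ⊆ ξ ⁻¹' T := by
        rintro x ⟨⟨hxS₀, hxJ⟩, hxnS⟩
        have hnJ : ξ x ∈ J := hxJ
        by_contra hxT
        simp only [mem_preimage, T, mem_union, not_or, mem_compl_iff, not_not] at hxT
        obtain ⟨hnim, hnB⟩ := hxT
        have hfpos : 0 < f (S ∩ S₀) (ξ x) := by
          rw [hfdef]
          obtain ⟨y, hyS, hyf⟩ := hnim
          have : y ∈ (S ∩ S₀) ∩ ξ ⁻¹' {ξ x} := ⟨hyS, by simp [hyf]⟩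
          exact (Set.ncard_pos (hfinSn _ (ξ x))).mpr ⟨y, this⟩
        have hfge : k ≤ f (S ∩ S₀) (ξ x) := by
          by_contra hlt
          exact hnB ⟨hnJ.1, hfpos, by omega⟩
        have hsub2 : (S ∩ S₀) ∩ ξ ⁻¹' {ξ x} ⊆ S₀ ∩ ξ ⁻¹' {ξ x} := by
          rintro y ⟨⟨_, hy2⟩, hy3⟩; exact ⟨hy2, hy3⟩
        have heq : (S ∩ S₀) ∩ ξ ⁻¹' {ξ x} = S₀ ∩ ξ ⁻¹' {ξ x} := by
          apply Set.eq_of_subset_of_ncard_le hsub2 _ (hfinSn S₀ (ξ x))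
          calc (S₀ ∩ ξ ⁻¹' {ξ x}).ncard = k := hnJ.2
          _ ≤ ((S ∩ S₀) ∩ ξ ⁻¹' {ξ x}).ncard := hfge
        have hxmem : x ∈ S₀ ∩ ξ ⁻¹' {ξ x} := ⟨hxS₀, rfl⟩
        rw [← heq] at hxmem
        exact hxnS hxmem.1.1
      have hpre : (ξ ⁻¹' T).Finite := by
        have : ξ ⁻¹' T = ⋃ n ∈ T, ξ ⁻¹' {n} := by ext y; simp
        rw [this]
        exact hTfin.biUnion fun n _ => hfin n
      exact hpre.subset hsub
  refine ⟨⟨A, hApi.1, hApi.2⟩, ?_⟩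
  intro X _ x xlim hx
  obtain ⟨hAinf, hA⟩ := hApi
  have hAinf' : (setOf (· ∈ A)).Infinite := hAinf
  refine ⟨Nat.nth (· ∈ A), Nat.nth_strictMono hAinf', ?_⟩
  rw [Filter.tendsto_def]
  intro U hU
  have hSU : x ⁻¹' U ∈ F := hx hU
  have hfinAS : (A \ x ⁻¹' U).Finite := hA _ hSU
  have hpre : {j | Nat.nth (· ∈ A) j ∈ A \ x ⁻¹' U}.Finite := by
    apply Set.Finite.preimage _ hfinAS
    exact Set.injOn_of_injective (Nat.nth_injective hAinf')
  rw [← Nat.cofinite_eq_atTop]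
  have hev : ∀ᶠ j in Filter.cofinite, Nat.nth (· ∈ A) j ∉ A \ x ⁻¹' U :=
    hpre.eventually_cofinite_notMem
  filter_upwards [hev] with j hj
  have hmem : Nat.nth (· ∈ A) j ∈ A := Nat.nth_mem_of_infinite hAinf' j
  simp only [mem_preimage, Function.comp_apply]
  by_contra hnU
  exact hj ⟨hmem, hnU⟩
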